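/- arXiv:2209.07646 — 5 statements merged into one kernel-verified Lean document; each statement's English description precedes it below -/
import Mathlib

section
/- For any smooth Hamiltonian H(q,p), the augmented Hamiltonian H̄(q,p,q̃,p̃) = H(q,p̃) + H(q̃,p) + ω(‖q-q̃‖² + ‖p-p̃‖²)/2 restricted to the diagonal submanifold {q = q̃, p = p̃} equals 2H(q,p), and the restriction of the augmented Hamiltonian flow to initial conditions on the diagonal satisfies: if (q(t),p(t),q̃(t),p̃(t)) solves the augmented Hamilton equations with q(0)=q̃(0) and p(0)=p̃(0), then q(t)=q̃(t) and p(t)=p̃(t) for all t, and (q(t),p(t)) solves the original Hamilton equations for H. -/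
open Set

lemma myAdd {α E : Type*} [PseudoEMetricSpace α]
    [NormedAddCommGroup E] [NormedSpace ℝ E] {f g : α → E}
    (hf : LocallyLipschitz f) (hg : LocallyLipschitz g) :
    LocallyLipschitz (fun x => f x + g x) := by
  have h2 : LocallyLipschitz (fun p : E × E => p.1 + p.2) := by
    have := (ContinuousLinearMap.fst ℝ E E + ContinuousLinearMap.snd ℝ E E).lipschitz
    exact this.locallyLipschitz
  exact h2.comp (hf.prodMk hg)

/-- Global uniqueness for autonomous ODEs with locally Lipschitz RHS. -/
lemma ode_unique_global {E : Type*} [NormedAddCommGroup E] [NormedSpace ℝ E]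
    {F : E → E} (hF : LocallyLipschitz F) {f g : ℝ → E}
    (hf : ∀ t, HasDerivAt f (F (f t)) t) (hg : ∀ t, HasDerivAt g (F (g t)) t)
    (h0 : f 0 = g 0) : ∀ t, f t = g t := by
  have hfc : Continuous f := continuous_iff_continuousAt.mpr fun t => (hf t).continuousAt
  have hgc : Continuous g := continuous_iff_continuousAt.mpr fun t => (hg t).continuousAt
  set S : Set ℝ := {t | f t = g t} with hS
  have hclosed : IsClosed S := isClosed_eq hfc hgc
  have hopen : IsOpen S := by
    rw [isOpen_iff_mem_nhds]
    intro t₀ ht₀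
    obtain ⟨K, u, hu, hKu⟩ := hF (f t₀)
    have heq : f =ᶠ[nhds t₀] g := by
      refine ODE_solution_unique_of_eventually (v := fun _ => F) (s := fun _ => u)
        (Filter.Eventually.of_forall fun _ => hKu) ?_ ?_ ht₀
      · filter_upwards [hfc.continuousAt (x := t₀) hu] with t ht using ⟨hf t, ht⟩
      · have hgu : g ⁻¹' u ∈ nhds t₀ := by
          apply hgc.continuousAt (x := t₀)
          rwa [← ht₀]
        filter_upwards [hgu] with t ht using ⟨hg t, ht⟩
    exact heq.mono fun t ht => ht
  have : S = univ := IsClopen.eq_univ ⟨hclosed, hopen⟩ ⟨0, h0⟩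
  intro t
  have := this ▸ mem_univ t
  exact this

lemma mySmul {α E : Type*} [PseudoEMetricSpace α]
    [NormedAddCommGroup E] [NormedSpace ℝ E] {f : α → E} (c : ℝ)
    (hf : LocallyLipschitz f) : LocallyLipschitz (fun x => c • f x) :=
  (lipschitzWith_smul c).locallyLipschitz.comp hf

lemma myNeg {α E : Type*} [PseudoEMetricSpace α]
    [NormedAddCommGroup E] [NormedSpace ℝ E] {f : α → E}
    (hf : LocallyLipschitz f) : LocallyLipschitz (fun x => -f x) := by
  have := mySmul (-1 : ℝ) hf
  simpa using this

lemma mySub {α E : Type*} [PseudoEMetricSpace α]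
    [NormedAddCommGroup E] [NormedSpace ℝ E] {f g : α → E}
    (hf : LocallyLipschitz f) (hg : LocallyLipschitz g) :
    LocallyLipschitz (fun x => f x - g x) := by
  have := myAdd hf (myNeg hg)
  simpa [sub_eq_add_neg] using this

set_option maxHeartbeats 1000000 in
/-- The augmented Hamiltonian
`H̄(q,p,q̃,p̃) = H(q,p̃) + H(q̃,p) + ω(‖q-q̃‖² + ‖p-p̃‖²)/2` restricted to the diagonal
equals `2H(q,p)`, and solutions of the augmented Hamilton equations starting on the
diagonal stay on the diagonal and project to solutions of the original Hamilton equations. -/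
theorem augmented_hamiltonian_diagonal
    {d : ℕ} (H : EuclideanSpace ℝ (Fin d) → EuclideanSpace ℝ (Fin d) → ℝ) (ω : ℝ)
    (hH : ContDiff ℝ 1 (fun x : EuclideanSpace ℝ (Fin d) × EuclideanSpace ℝ (Fin d) => H x.1 x.2))
    (hLip : LocallyLipschitz (fun x : EuclideanSpace ℝ (Fin d) × EuclideanSpace ℝ (Fin d) =>
      (gradient (fun q' => H q' x.2) x.1, gradient (fun p' => H x.1 p') x.2)))
    (Q P Qt Pt : ℝ → EuclideanSpace ℝ (Fin d))
    (hQ : ∀ t : ℝ, HasDerivAt Q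
      (gradient (fun p' => H (Qt t) p') (P t) + ω • (P t - Pt t)) t)
    (hP : ∀ t : ℝ, HasDerivAt P
      (-(gradient (fun q' => H q' (Pt t)) (Q t)) - ω • (Q t - Qt t)) t)
    (hQt : ∀ t : ℝ, HasDerivAt Qt
      (gradient (fun p' => H (Q t) p') (Pt t) + ω • (Pt t - P t)) t)
    (hPt : ∀ t : ℝ, HasDerivAt Pt
      (-(gradient (fun q' => H q' (P t)) (Qt t)) - ω • (Qt t - Q t)) t)
    (hq0 : Q 0 = Qt 0) (hp0 : P 0 = Pt 0) :
    (∀ q p : EuclideanSpace ℝ (Fin d),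
      H q p + H q p + ω * (‖q - q‖ ^ 2 / 2 + ‖p - p‖ ^ 2 / 2) = 2 * H q p) ∧
    (∀ t : ℝ, Q t = Qt t ∧ P t = Pt t) ∧
    (∀ t : ℝ,
      HasDerivAt Q (gradient (fun p' => H (Q t) p') (P t)) t ∧
      HasDerivAt P (-gradient (fun q' => H q' (P t)) (Q t)) t) := by
  classical
  let Euc := EuclideanSpace ℝ (Fin d)
  let G : Euc × Euc → Euc × Euc := fun x =>
    (gradient (fun q' => H q' x.2) x.1, gradient (fun p' => H x.1 p') x.2)
  have hGlip : LocallyLipschitz G := hLip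
  let F : (Euc × Euc) × (Euc × Euc) → (Euc × Euc) × (Euc × Euc) := fun z =>
    (((G (z.2.1, z.1.2)).2 + ω • (z.1.2 - z.2.2),
      -((G (z.1.1, z.2.2)).1) - ω • (z.1.1 - z.2.1)),
     ((G (z.1.1, z.2.2)).2 + ω • (z.2.2 - z.1.2),
      -((G (z.2.1, z.1.2)).1) - ω • (z.2.1 - z.1.1)))
  -- basic Lipschitz building blocks
  have l11 : LocallyLipschitz (fun z : (Euc × Euc) × (Euc × Euc) => z.1.1) :=
    (LipschitzWith.prod_fst.comp LipschitzWith.prod_fst).locallyLipschitz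
  have l12 : LocallyLipschitz (fun z : (Euc × Euc) × (Euc × Euc) => z.1.2) :=
    (LipschitzWith.prod_snd.comp LipschitzWith.prod_fst).locallyLipschitz
  have l21 : LocallyLipschitz (fun z : (Euc × Euc) × (Euc × Euc) => z.2.1) :=
    (LipschitzWith.prod_fst.comp LipschitzWith.prod_snd).locallyLipschitz
  have l22 : LocallyLipschitz (fun z : (Euc × Euc) × (Euc × Euc) => z.2.2) :=
    (LipschitzWith.prod_snd.comp LipschitzWith.prod_snd).locallyLipschitz
  have lGa : LocallyLipschitz (fun z : (Euc × Euc) × (Euc × Euc) => G (z.2.1, z.1.2)) :=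
    hGlip.comp (l21.prodMk l12)
  have lGb : LocallyLipschitz (fun z : (Euc × Euc) × (Euc × Euc) => G (z.1.1, z.2.2)) :=
    hGlip.comp (l11.prodMk l22)
  have lfst : LocallyLipschitz (fun y : Euc × Euc => y.1) :=
    LipschitzWith.prod_fst.locallyLipschitz
  have lsnd : LocallyLipschitz (fun y : Euc × Euc => y.2) :=
    LipschitzWith.prod_snd.locallyLipschitz
  have hFlip : LocallyLipschitz F := by
    refine LocallyLipschitz.prodMk (LocallyLipschitz.prodMk ?_ ?_) (LocallyLipschitz.prodMk ?_ ?_)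
    · exact myAdd (lsnd.comp lGa) (mySmul ω (mySub l12 l22))
    · exact mySub (myNeg (lfst.comp lGb)) (mySmul ω (mySub l11 l21))
    · exact myAdd (lsnd.comp lGb) (mySmul ω (mySub l22 l12))
    · exact mySub (myNeg (lfst.comp lGa)) (mySmul ω (mySub l21 l11))
  let f : ℝ → (Euc × Euc) × (Euc × Euc) := fun t => ((Q t, P t), (Qt t, Pt t))
  let g : ℝ → (Euc × Euc) × (Euc × Euc) := fun t => ((Qt t, Pt t), (Q t, P t))
  have hfd : ∀ t, HasDerivAt f (F (f t)) t := fun t =>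
    ((hQ t).prodMk (hP t)).prodMk ((hQt t).prodMk (hPt t))
  have hgd : ∀ t, HasDerivAt g (F (g t)) t := fun t =>
    ((hQt t).prodMk (hPt t)).prodMk ((hQ t).prodMk (hP t))
  have h0 : f 0 = g 0 := by simp only [f, g, hq0, hp0]
  have key : ∀ t, f t = g t := ode_unique_global hFlip hfd hgd h0
  have hdiag : ∀ t : ℝ, Q t = Qt t ∧ P t = Pt t := by
    intro t
    have h := key t
    simp only [f, g, Prod.mk.injEq] at h
    exact ⟨h.1.1, h.1.2⟩
  refine ⟨?_, hdiag, ?_⟩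
  · intro q p; simp; ring
  · intro t
    obtain ⟨h1, h2⟩ := hdiag t
    constructor
    · have h := hQ t
      rw [← h1, ← h2] at h
      simpa using h
    · have h := hP t
      rw [← h1, ← h2] at h
      simpa using h
end

section
/- The diagonal set {(q,p,q̃,p̃) : q = q̃, p = p̃} is invariant under the exact flow of the augmented Hamiltonian H̄(q,p,q̃,p̃) = H(q,p̃) + H(q̃,p) + ω(‖q-q̃‖² + ‖p-p̃‖²)/2. -/
open Set

section Aux

variable {α : Type*} {E : Type*} [PseudoEMetricSpace α] [SeminormedAddCommGroup E]
  [NormedSpace ℝ E]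

lemma LocallyLipschitz.add' {f g : α → E} (hf : LocallyLipschitz f) (hg : LocallyLipschitz g) :
    LocallyLipschitz (fun x => f x + g x) :=
  ((LipschitzWith.prod_fst.add LipschitzWith.prod_snd).locallyLipschitz).comp (hf.prodMk hg)

lemma LocallyLipschitz.sub' {f g : α → E} (hf : LocallyLipschitz f) (hg : LocallyLipschitz g) :
    LocallyLipschitz (fun x => f x - g x) :=
  ((LipschitzWith.prod_fst.sub LipschitzWith.prod_snd).locallyLipschitz).comp (hf.prodMk hg)

lemma LocallyLipschitz.smul' (c : ℝ) {f : α → E} (hf : LocallyLipschitz f) :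
    LocallyLipschitz (fun x => c • f x) :=
  ((lipschitzWith_smul c).locallyLipschitz).comp hf

lemma LocallyLipschitz.neg' {f : α → E} (hf : LocallyLipschitz f) :
    LocallyLipschitz (fun x => -(f x)) := by
  simpa only [neg_one_smul] using LocallyLipschitz.smul' (-1 : ℝ) hf

/-- Global uniqueness of solutions of an autonomous ODE with locally Lipschitz RHS. -/
lemma ODE_unique_of_locallyLipschitz {F : Type*} [NormedAddCommGroup F] [NormedSpace ℝ F]
    {v : F → F} (hv : LocallyLipschitz v) {f g : ℝ → F}
    (hf : ∀ t, HasDerivAt f (v (f t)) t) (hg : ∀ t, HasDerivAt g (v (g t)) t)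
    (h0 : f 0 = g 0) : ∀ t, f t = g t := by
  have hS : IsClopen {t : ℝ | f t = g t} := by
    constructor
    · exact isClosed_eq (continuous_iff_continuousAt.2 fun t => (hf t).continuousAt)
        (continuous_iff_continuousAt.2 fun t => (hg t).continuousAt)
    · rw [isOpen_iff_mem_nhds]
      intro t₀ ht₀
      have ht₀' : f t₀ = g t₀ := ht₀
      obtain ⟨K, s, hs, hKs⟩ := hv (f t₀)
      have hs' : s ∈ nhds (g t₀) := ht₀' ▸ hs
      have heq : f =ᶠ[nhds t₀] g := by
        refine ODE_solution_unique_of_eventually (v := fun _ x => v x) (s := fun _ => s)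
          (Filter.Eventually.of_forall fun _ => hKs) ?_ ?_ ht₀'
        · filter_upwards [(hf t₀).continuousAt.preimage_mem_nhds hs] with t ht using ⟨hf t, ht⟩
        · filter_upwards [(hg t₀).continuousAt.preimage_mem_nhds hs'] with t ht using ⟨hg t, ht⟩
      exact heq
  rcases isClopen_iff.mp hS with h | h
  · exfalso
    have h0' : (0:ℝ) ∈ {t : ℝ | f t = g t} := h0
    rw [h] at h0'
    exact h0'
  · intro t
    have : t ∈ {t : ℝ | f t = g t} := by rw [h]; trivial
    exact this

end Aux


/-- Abstract form: diagonal invariance for the coupled system with vector field `G`. -/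
lemma diag_invariant_aux {E : Type*} [NormedAddCommGroup E] [NormedSpace ℝ E]
    (G : E × E → E × E) (hLip : LocallyLipschitz G) (ω : ℝ)
    (Q P Qt Pt : ℝ → E)
    (hQ : ∀ t : ℝ, HasDerivAt Q ((G (Qt t, P t)).2 + ω • (P t - Pt t)) t)
    (hP : ∀ t : ℝ, HasDerivAt P (-(G (Q t, Pt t)).1 - ω • (Q t - Qt t)) t)
    (hQt : ∀ t : ℝ, HasDerivAt Qt ((G (Q t, Pt t)).2 + ω • (Pt t - P t)) t)
    (hPt : ∀ t : ℝ, HasDerivAt Pt (-(G (Qt t, P t)).1 - ω • (Qt t - Q t)) t)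
    (hq0 : Q 0 = Qt 0) (hp0 : P 0 = Pt 0) :
    ∀ t : ℝ, Q t = Qt t ∧ P t = Pt t := by
  set F : (E × E) × (E × E) → (E × E) × (E × E) := fun z =>
    (((G (z.2.1, z.1.2)).2 + ω • (z.1.2 - z.2.2),
      -(G (z.1.1, z.2.2)).1 - ω • (z.1.1 - z.2.1)),
     ((G (z.1.1, z.2.2)).2 + ω • (z.2.2 - z.1.2),
      -(G (z.2.1, z.1.2)).1 - ω • (z.2.1 - z.1.1))) with hF
  have p11 : LocallyLipschitz (fun z : (E × E) × (E × E) => z.1.1) :=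
    (LipschitzWith.prod_fst.comp LipschitzWith.prod_fst).locallyLipschitz
  have p12 : LocallyLipschitz (fun z : (E × E) × (E × E) => z.1.2) :=
    (LipschitzWith.prod_snd.comp LipschitzWith.prod_fst).locallyLipschitz
  have p21 : LocallyLipschitz (fun z : (E × E) × (E × E) => z.2.1) :=
    (LipschitzWith.prod_fst.comp LipschitzWith.prod_snd).locallyLipschitz
  have p22 : LocallyLipschitz (fun z : (E × E) × (E × E) => z.2.2) :=
    (LipschitzWith.prod_snd.comp LipschitzWith.prod_snd).locallyLipschitz
  have hA : LocallyLipschitz (fun z : (E × E) × (E × E) => G (z.2.1, z.1.2)) :=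
    hLip.comp (p21.prodMk p12)
  have hB : LocallyLipschitz (fun z : (E × E) × (E × E) => G (z.1.1, z.2.2)) :=
    hLip.comp (p11.prodMk p22)
  have hFLip : LocallyLipschitz F := by
    refine LocallyLipschitz.prodMk (LocallyLipschitz.prodMk ?_ ?_) (LocallyLipschitz.prodMk ?_ ?_)
    · exact (LipschitzWith.prod_snd.locallyLipschitz.comp hA).add'
        (LocallyLipschitz.smul' ω (p12.sub' p22))
    · exact ((LipschitzWith.prod_fst.locallyLipschitz.comp hB).neg').sub'
        (LocallyLipschitz.smul' ω (p11.sub' p21))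
    · exact (LipschitzWith.prod_snd.locallyLipschitz.comp hB).add'
        (LocallyLipschitz.smul' ω (p22.sub' p12))
    · exact ((LipschitzWith.prod_fst.locallyLipschitz.comp hA).neg').sub'
        (LocallyLipschitz.smul' ω (p21.sub' p11))
  set f : ℝ → (E × E) × (E × E) := fun t => ((Q t, P t), (Qt t, Pt t)) with hf
  set g : ℝ → (E × E) × (E × E) := fun t => ((Qt t, Pt t), (Q t, P t)) with hg
  have hf' : ∀ t, HasDerivAt f (F (f t)) t := fun t =>
    HasDerivAt.prodMk (HasDerivAt.prodMk (hQ t) (hP t)) (HasDerivAt.prodMk (hQt t) (hPt t))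
  have hg' : ∀ t, HasDerivAt g (F (g t)) t := fun t =>
    HasDerivAt.prodMk (HasDerivAt.prodMk (hQt t) (hPt t)) (HasDerivAt.prodMk (hQ t) (hP t))
  have h0 : f 0 = g 0 := by simp [hf, hg, hq0, hp0]
  have key := ODE_unique_of_locallyLipschitz hFLip hf' hg' h0
  intro t
  have := key t
  simp only [hf, hg, Prod.mk.injEq] at this
  exact ⟨this.1.1, this.1.2⟩

/-- The diagonal set `{(q,p,q̃,p̃) : q = q̃, p = p̃}` is invariant under the
exact flow of the augmented Hamiltonian
`H̄(q,p,q̃,p̃) = H(q,p̃) + H(q̃,p) + ω(‖q-q̃‖² + ‖p-p̃‖²)/2`: any solution of the canonical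
Hamilton equations of `H̄` in the extended phase space starting on the diagonal remains
on the diagonal. -/
theorem augmented_flow_diagonal_invariant
    {d : ℕ} (H : EuclideanSpace ℝ (Fin d) → EuclideanSpace ℝ (Fin d) → ℝ) (ω : ℝ)
    (hH : ContDiff ℝ 1 (fun x : EuclideanSpace ℝ (Fin d) × EuclideanSpace ℝ (Fin d) => H x.1 x.2))
    (hLip : LocallyLipschitz (fun x : EuclideanSpace ℝ (Fin d) × EuclideanSpace ℝ (Fin d) =>
      (gradient (fun q' => H q' x.2) x.1, gradient (fun p' => H x.1 p') x.2)))
    (Q P Qt Pt : ℝ → EuclideanSpace ℝ (Fin d))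
    (hQ : ∀ t : ℝ, HasDerivAt Q
      (gradient (fun p' => H (Qt t) p') (P t) + ω • (P t - Pt t)) t)
    (hP : ∀ t : ℝ, HasDerivAt P
      (-(gradient (fun q' => H q' (Pt t)) (Q t)) - ω • (Q t - Qt t)) t)
    (hQt : ∀ t : ℝ, HasDerivAt Qt
      (gradient (fun p' => H (Q t) p') (Pt t) + ω • (Pt t - P t)) t)
    (hPt : ∀ t : ℝ, HasDerivAt Pt
      (-(gradient (fun q' => H q' (P t)) (Qt t)) - ω • (Qt t - Q t)) t)
    (hq0 : Q 0 = Qt 0) (hp0 : P 0 = Pt 0) :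
    ∀ t : ℝ, Q t = Qt t ∧ P t = Pt t := by
  exact diag_invariant_aux
    (fun x => (gradient (fun q' => H q' x.2) x.1, gradient (fun p' => H x.1 p') x.2))
    hLip ω Q P Qt Pt hQ hP hQt hPt hq0 hp0
end

section
/- The map ψ_{H_a}^{Δt} : (q, p, q̃, p̃) ↦ (q, p - Δt·∇_q H(q, p̃), q̃ + Δt·∇_p̃ H(q, p̃), p̃) is symplectic on the extended phase space R^{4d}, i.e., its Jacobian M satisfies Mᵀ J M = J where J is the canonical symplectic matrix pairing positions (q, q̃) with momenta (p, p̃). -/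
open ContinuousLinearMap InnerProductSpace

set_option maxHeartbeats 1000000 in
private theorem aux_sympl {E : Type*} [NormedAddCommGroup E] [InnerProductSpace ℝ E]
    [CompleteSpace E]
    (H : E → E → ℝ)
    (hH : ContDiff ℝ 2 (fun x : E × E => H x.1 x.2)) (Δt : ℝ)
    (F : E × E × E × E → E × E × E × E)
    (hF : F = fun x => (x.1,
       x.2.1 - Δt • gradient (fun q' => H q' x.2.2.2) x.1,
       x.2.2.1 + Δt • gradient (fun p' => H x.1 p') x.2.2.2,
       x.2.2.2))
    (x u v : E × E × E × E) :
    @inner ℝ _ _ (fderiv ℝ F x u).1 (fderiv ℝ F x v).2.1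
      - @inner ℝ _ _ (fderiv ℝ F x u).2.1 (fderiv ℝ F x v).1
      + @inner ℝ _ _ (fderiv ℝ F x u).2.2.1 (fderiv ℝ F x v).2.2.2
      - @inner ℝ _ _ (fderiv ℝ F x u).2.2.2 (fderiv ℝ F x v).2.2.1
      = @inner ℝ _ _ u.1 v.2.1 - @inner ℝ _ _ u.2.1 v.1
        + @inner ℝ _ _ u.2.2.1 v.2.2.2 - @inner ℝ _ _ u.2.2.2 v.2.2.1 := by
  subst hF
  let Φ : E × E → ℝ := fun z => H z.1 z.2
  let D : (E →L[ℝ] ℝ) →L[ℝ] E :=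
    (toDual ℝ E).symm.toContinuousLinearEquiv.toContinuousLinearMap
  let L₁ : ((E × E) →L[ℝ] ℝ) →L[ℝ] (E →L[ℝ] ℝ) :=
    (ContinuousLinearMap.compL ℝ E (E × E) ℝ).flip (ContinuousLinearMap.inl ℝ E E)
  let L₂ : ((E × E) →L[ℝ] ℝ) →L[ℝ] (E →L[ℝ] ℝ) :=
    (ContinuousLinearMap.compL ℝ E (E × E) ℝ).flip (ContinuousLinearMap.inr ℝ E E)
  have hg_eq : ∀ (a b : E), gradient (fun q' => H q' b) a = D (L₁ (fderiv ℝ Φ (a, b))) := by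
    intro a b
    have hd : HasFDerivAt (fun q' : E => H q' b)
        ((fderiv ℝ Φ (a, b)).comp (ContinuousLinearMap.inl ℝ E E)) a :=
      ((hH.differentiable two_ne_zero (a, b)).hasFDerivAt).comp (f := fun e : E => (e, b)) a
        (hasFDerivAt_prodMk_left a b)
    rw [gradient, hd.fderiv]
    rfl
  have hh_eq : ∀ (a b : E), gradient (fun p' => H a p') b = D (L₂ (fderiv ℝ Φ (a, b))) := by
    intro a b
    have hd : HasFDerivAt (fun p' : E => H a p')
        ((fderiv ℝ Φ (a, b)).comp (ContinuousLinearMap.inr ℝ E E)) b :=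
      ((hH.differentiable two_ne_zero (a, b)).hasFDerivAt).comp (f := fun e : E => (a, e)) b
        (hasFDerivAt_prodMk_right a b)
    rw [gradient, hd.fderiv]
    rfl
  have hFeq : (fun y : E × E × E × E => (y.1,
       y.2.1 - Δt • gradient (fun q' => H q' y.2.2.2) y.1,
       y.2.2.1 + Δt • gradient (fun p' => H y.1 p') y.2.2.2,
       y.2.2.2))
      = (fun y : E × E × E × E =>
        (y.1, y.2.1 - Δt • D (L₁ (fderiv ℝ Φ (y.1, y.2.2.2))),
         y.2.2.1 + Δt • D (L₂ (fderiv ℝ Φ (y.1, y.2.2.2))), y.2.2.2)) := by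
    funext y
    rw [hg_eq, hh_eq]
  rw [hFeq]
  -- second derivative
  have hΦ' : ContDiff ℝ 1 (fderiv ℝ Φ) := hH.fderiv_right (by norm_num)
  set A : (E × E) →L[ℝ] ((E × E) →L[ℝ] ℝ) :=
    fderiv ℝ (fderiv ℝ Φ) (x.1, x.2.2.2) with hA
  have hA' : HasFDerivAt (fderiv ℝ Φ) A (x.1, x.2.2.2) :=
    (hΦ'.differentiable one_ne_zero _).hasFDerivAt
  have hsym : ∀ w₁ w₂, A w₁ w₂ = A w₂ w₁ :=
    hH.contDiffAt.isSymmSndFDerivAt (by simp [minSmoothness_of_isRCLikeNormedField])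
  -- projections
  let P1 : (E × E × E × E) →L[ℝ] E := ContinuousLinearMap.fst ℝ E (E × E × E)
  let Q : (E × E × E × E) →L[ℝ] (E × E × E) := ContinuousLinearMap.snd ℝ E (E × E × E)
  let P2 : (E × E × E × E) →L[ℝ] E := (ContinuousLinearMap.fst ℝ E (E × E)).comp Q
  let P3 : (E × E × E × E) →L[ℝ] E :=
    (ContinuousLinearMap.fst ℝ E E).comp (((ContinuousLinearMap.snd ℝ E (E × E)).comp Q))
  let P4 : (E × E × E × E) →L[ℝ] E :=
    (ContinuousLinearMap.snd ℝ E E).comp (((ContinuousLinearMap.snd ℝ E (E × E)).comp Q))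
  let π : (E × E × E × E) →L[ℝ] (E × E) := P1.prod P4
  have hπ : HasFDerivAt (fun y : E × E × E × E => (y.1, y.2.2.2)) π x := π.hasFDerivAt
  have hfx : HasFDerivAt (fun y : E × E × E × E => fderiv ℝ Φ (y.1, y.2.2.2))
      (A.comp π) x := by
    exact HasFDerivAt.comp (𝕜 := ℝ) (E := E × E × E × E) (F := E × E) (G := (E × E) →L[ℝ] ℝ) x hA' hπ
  have hgx : HasFDerivAt (fun y : E × E × E × E => D (L₁ (fderiv ℝ Φ (y.1, y.2.2.2))))
      ((D.comp L₁).comp (A.comp π)) x := by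
    exact HasFDerivAt.comp (𝕜 := ℝ) (E := E × E × E × E) (F := (E × E) →L[ℝ] ℝ) (G := E) x ((D.comp L₁).hasFDerivAt) hfx
  have hhx : HasFDerivAt (fun y : E × E × E × E => D (L₂ (fderiv ℝ Φ (y.1, y.2.2.2))))
      ((D.comp L₂).comp (A.comp π)) x := by
    exact HasFDerivAt.comp (𝕜 := ℝ) (E := E × E × E × E) (F := (E × E) →L[ℝ] ℝ) (G := E) x ((D.comp L₂).hasFDerivAt) hfx
  have hFd : HasFDerivAt (fun y : E × E × E × E =>
      (y.1, y.2.1 - Δt • D (L₁ (fderiv ℝ Φ (y.1, y.2.2.2))),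
       y.2.2.1 + Δt • D (L₂ (fderiv ℝ Φ (y.1, y.2.2.2))), y.2.2.2))
      (P1.prod (((P2 - Δt • ((D.comp L₁).comp (A.comp π)))).prod
        ((P3 + Δt • ((D.comp L₂).comp (A.comp π))).prod P4))) x :=
    HasFDerivAt.prodMk (P1.hasFDerivAt)
      (HasFDerivAt.prodMk (HasFDerivAt.sub (P2.hasFDerivAt) (hgx.const_smul Δt))
        (HasFDerivAt.prodMk (HasFDerivAt.add (P3.hasFDerivAt) (hhx.const_smul Δt)) (P4.hasFDerivAt)))
  rw [hFd.fderiv]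
  -- evaluate
  have hDap : ∀ (φ : E →L[ℝ] ℝ) (a : E), @inner ℝ _ _ (D φ) a = φ a := by
    intro φ a; exact InnerProductSpace.toDual_symm_apply
  have hDap' : ∀ (φ : E →L[ℝ] ℝ) (a : E), @inner ℝ _ _ a (D φ) = φ a := by
    intro φ a; rw [real_inner_comm]; exact hDap φ a
  have hL₁ap : ∀ (T : (E × E) →L[ℝ] ℝ) (a : E), (L₁ T) a = T (a, 0) := fun T a => rfl
  have hL₂ap : ∀ (T : (E × E) →L[ℝ] ℝ) (a : E), (L₂ T) a = T (0, a) := fun T a => rfl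
  have expand1 : ∀ (p q : E) (w : E × E), A (p, q) w = A (p, 0) w + A (0, q) w := by
    intro p q w
    have : ((p, q) : E × E) = (p, 0) + (0, q) := by simp
    rw [this, map_add, ContinuousLinearMap.add_apply]
  have expand2 : ∀ (w : E × E) (p q : E), A w (p, q) = A w (p, 0) + A w (0, q) := by
    intro w p q
    have : ((p, q) : E × E) = (p, 0) + (0, q) := by simp
    rw [this, map_add]
  simp only [ContinuousLinearMap.prod_apply, ContinuousLinearMap.sub_apply,
    ContinuousLinearMap.add_apply, ContinuousLinearMap.smul_apply,
    ContinuousLinearMap.coe_comp', Function.comp_apply, P1, P2, P3, P4, Q, π,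
    ContinuousLinearMap.coe_fst', ContinuousLinearMap.coe_snd',
    inner_sub_left, inner_add_left, inner_sub_right, inner_add_right,
    real_inner_smul_left, real_inner_smul_right, hDap, hDap', hL₁ap, hL₂ap]
  rw [expand1 v.1 v.2.2.2 (u.1, 0), expand1 v.1 v.2.2.2 ((0 : E), u.2.2.2),
      expand1 u.1 u.2.2.2 (v.1, 0), expand1 u.1 u.2.2.2 ((0 : E), v.2.2.2),
      hsym (v.1, 0) (u.1, 0), hsym (0, v.2.2.2) (u.1, 0),
      hsym (v.1, 0) (0, u.2.2.2), hsym (0, v.2.2.2) (0, u.2.2.2)]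
  ring



/-- The canonical symplectic form on the extended phase space with coordinates
`(q, p, q̃, p̃)`, pairing the positions `(q, q̃)` with the momenta `(p, p̃)`. -/
noncomputable def extSymplForm {d : ℕ}
    (x y : EuclideanSpace ℝ (Fin d) × EuclideanSpace ℝ (Fin d) ×
      EuclideanSpace ℝ (Fin d) × EuclideanSpace ℝ (Fin d)) : ℝ :=
  @inner ℝ _ _ x.1 y.2.1 - @inner ℝ _ _ x.2.1 y.1 + @inner ℝ _ _ x.2.2.1 y.2.2.2 - @inner ℝ _ _ x.2.2.2 y.2.2.1

/-- The map
`ψ_{H_a}^{Δt} : (q,p,q̃,p̃) ↦ (q, p - Δt∇_q H(q,p̃), q̃ + Δt∇_p̃ H(q,p̃), p̃)`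
is symplectic on the extended phase space: its Jacobian preserves the canonical
symplectic form pairing positions `(q,q̃)` with momenta `(p,p̃)`. -/
theorem psi_Ha_symplectic
    {d : ℕ} (H : EuclideanSpace ℝ (Fin d) → EuclideanSpace ℝ (Fin d) → ℝ)
    (hH : ContDiff ℝ 2 (fun x : EuclideanSpace ℝ (Fin d) × EuclideanSpace ℝ (Fin d) => H x.1 x.2))
    (Δt : ℝ)
    (F : EuclideanSpace ℝ (Fin d) × EuclideanSpace ℝ (Fin d) ×
        EuclideanSpace ℝ (Fin d) × EuclideanSpace ℝ (Fin d) →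
      EuclideanSpace ℝ (Fin d) × EuclideanSpace ℝ (Fin d) ×
        EuclideanSpace ℝ (Fin d) × EuclideanSpace ℝ (Fin d))
    (hF : F = fun x =>
      (x.1,
       x.2.1 - Δt • gradient (fun q' => H q' x.2.2.2) x.1,
       x.2.2.1 + Δt • gradient (fun p' => H x.1 p') x.2.2.2,
       x.2.2.2)) :
    ∀ x u v, extSymplForm (fderiv ℝ F x u) (fderiv ℝ F x v) = extSymplForm u v := by
  intro x u v
  exact aux_sympl H hH Δt F hF x u v
end

section
/- The map ψ_{H_b}^{Δt} : (q, p, q̃, p̃) ↦ (q + Δt·∇_p H(q̃, p), p, q̃, p̃ - Δt·∇_q̃ H(q̃, p)) is symplectic on the extended phase space R^{4d} with respect to the canonical symplectic form pairing (q, q̃) with (p, p̃). -/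
open InnerProductSpace ContinuousLinearMap

section Aux

variable {E : Type*} [NormedAddCommGroup E] [InnerProductSpace ℝ E] [CompleteSpace E]

/-- Map a functional on `E × E` to the vector representing its restriction to the
second factor. -/
noncomputable def psiAuxR (E : Type*) [NormedAddCommGroup E] [InnerProductSpace ℝ E]
    [CompleteSpace E] : ((E × E) →L[ℝ] ℝ) →L[ℝ] E :=
  ((toDual ℝ E).toContinuousLinearEquiv.symm : (E →L[ℝ] ℝ) ≃L[ℝ] E).toContinuousLinearMap.comp
    ((compL ℝ E (E × E) ℝ).flip (ContinuousLinearMap.inr ℝ E E))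

/-- Map a functional on `E × E` to the vector representing its restriction to the
first factor. -/
noncomputable def psiAuxL (E : Type*) [NormedAddCommGroup E] [InnerProductSpace ℝ E]
    [CompleteSpace E] : ((E × E) →L[ℝ] ℝ) →L[ℝ] E :=
  ((toDual ℝ E).toContinuousLinearEquiv.symm : (E →L[ℝ] ℝ) ≃L[ℝ] E).toContinuousLinearMap.comp
    ((compL ℝ E (E × E) ℝ).flip (ContinuousLinearMap.inl ℝ E E))

lemma psiAux_toCLE_symm (ψ : E →L[ℝ] ℝ) :
    (toDual ℝ E).toContinuousLinearEquiv.symm ψ = (toDual ℝ E).symm ψ := rfl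

lemma inner_psiAuxR (φ : (E × E) →L[ℝ] ℝ) (v : E) :
    (inner ℝ (psiAuxR E φ) v : ℝ) = φ (0, v) := by
  simp [psiAuxR, psiAux_toCLE_symm, real_inner_comm _ v, toDual_symm_apply]

lemma inner_psiAuxL (φ : (E × E) →L[ℝ] ℝ) (v : E) :
    (inner ℝ (psiAuxL E φ) v : ℝ) = φ (v, 0) := by
  simp [psiAuxL, psiAux_toCLE_symm, real_inner_comm _ v, toDual_symm_apply]

lemma gradient_slice_right (H2 : E × E → ℝ) (z : E × E) (hd : DifferentiableAt ℝ H2 z) :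
    gradient (fun p' => H2 (z.1, p')) z.2 = psiAuxR E (fderiv ℝ H2 z) := by
  have h1 : HasFDerivAt (fun p' : E => (z.1, p')) (ContinuousLinearMap.inr ℝ E E) z.2 :=
    hasFDerivAt_prodMk_right z.1 z.2
  have h2 : HasFDerivAt (fun p' => H2 (z.1, p'))
      ((fderiv ℝ H2 z).comp (ContinuousLinearMap.inr ℝ E E)) z.2 := by
    have := hd.hasFDerivAt
    exact (Prod.mk.eta (p := z) ▸ this).comp z.2 h1
  have h3 : HasGradientAt (fun p' => H2 (z.1, p')) (psiAuxR E (fderiv ℝ H2 z)) z.2 := by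
    rw [hasGradientAt_iff_hasFDerivAt]
    convert h2 using 1
    · rfl
    simp [psiAuxR, psiAux_toCLE_symm]
  exact h3.gradient

lemma gradient_slice_left (H2 : E × E → ℝ) (z : E × E) (hd : DifferentiableAt ℝ H2 z) :
    gradient (fun q' => H2 (q', z.2)) z.1 = psiAuxL E (fderiv ℝ H2 z) := by
  have h1 : HasFDerivAt (fun q' : E => (q', z.2)) (ContinuousLinearMap.inl ℝ E E) z.1 :=
    hasFDerivAt_prodMk_left z.1 z.2
  have h2 : HasFDerivAt (fun q' => H2 (q', z.2))
      ((fderiv ℝ H2 z).comp (ContinuousLinearMap.inl ℝ E E)) z.1 := by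
    have := hd.hasFDerivAt
    exact (Prod.mk.eta (p := z) ▸ this).comp z.1 h1
  have h3 : HasGradientAt (fun q' => H2 (q', z.2)) (psiAuxL E (fderiv ℝ H2 z)) z.1 := by
    rw [hasGradientAt_iff_hasFDerivAt]
    convert h2 using 1
    · rfl
    simp [psiAuxL, psiAux_toCLE_symm]
  exact h3.gradient

end Aux

/-- The map
`ψ_{H_b}^{Δt} : (q,p,q̃,p̃) ↦ (q + Δt∇_p H(q̃,p), p, q̃, p̃ - Δt∇_q̃ H(q̃,p))`
is symplectic on the extended phase space with respect to the canonical symplectic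
form pairing `(q,q̃)` with `(p,p̃)`. -/
theorem psi_Hb_symplectic
    {d : ℕ} (H : EuclideanSpace ℝ (Fin d) → EuclideanSpace ℝ (Fin d) → ℝ)
    (hH : ContDiff ℝ 2 (fun x : EuclideanSpace ℝ (Fin d) × EuclideanSpace ℝ (Fin d) => H x.1 x.2))
    (Δt : ℝ)
    (F : EuclideanSpace ℝ (Fin d) × EuclideanSpace ℝ (Fin d) ×
        EuclideanSpace ℝ (Fin d) × EuclideanSpace ℝ (Fin d) →
      EuclideanSpace ℝ (Fin d) × EuclideanSpace ℝ (Fin d) ×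
        EuclideanSpace ℝ (Fin d) × EuclideanSpace ℝ (Fin d))
    (hF : F = fun x =>
      (x.1 + Δt • gradient (fun p' => H x.2.2.1 p') x.2.1,
       x.2.1,
       x.2.2.1,
       x.2.2.2 - Δt • gradient (fun q' => H q' x.2.1) x.2.2.1)) :
    ∀ x u v, extSymplForm (fderiv ℝ F x u) (fderiv ℝ F x v) = extSymplForm u v := by
  subst hF
  intro x u v
  let E := EuclideanSpace ℝ (Fin d)
  set H2 : E × E → ℝ := fun z => H z.1 z.2 with hH2
  set D : E × E → ((E × E) →L[ℝ] ℝ) := fderiv ℝ H2 with hDdef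
  have hH' : ContDiff ℝ 2 H2 := hH
  have hDdiff : ContDiff ℝ 1 D := hH'.fderiv_right (by norm_num)
  have hH2diff : Differentiable ℝ H2 := hH'.differentiable (by norm_num)
  set z : E × E := (x.2.2.1, x.2.1) with hz
  set D2 : (E × E) →L[ℝ] ((E × E) →L[ℝ] ℝ) := fderiv ℝ D z with hD2
  have hsymm : ∀ a b : E × E, D2 a b = D2 b a := by
    intro a b
    exact (hH'.contDiffAt.isSymmSndFDerivAt (by simp)) a b
  set p1 : (E × E × E × E) →L[ℝ] E := ContinuousLinearMap.fst ℝ E (E × E × E) with hp1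
  set p2 : (E × E × E × E) →L[ℝ] E := (ContinuousLinearMap.fst ℝ E (E × E)).comp
      (ContinuousLinearMap.snd ℝ E (E × E × E)) with hp2
  set p3 : (E × E × E × E) →L[ℝ] E := (ContinuousLinearMap.fst ℝ E E).comp
      ((ContinuousLinearMap.snd ℝ E (E × E)).comp
        (ContinuousLinearMap.snd ℝ E (E × E × E))) with hp3
  set p4 : (E × E × E × E) →L[ℝ] E := (ContinuousLinearMap.snd ℝ E E).comp
      ((ContinuousLinearMap.snd ℝ E (E × E)).comp
        (ContinuousLinearMap.snd ℝ E (E × E × E))) with hp4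
  set pr : (E × E × E × E) →L[ℝ] (E × E) := p3.prod p2 with hpr
  set L : (E × E × E × E) →L[ℝ] (E × E × E × E) :=
    (p1 + Δt • ((psiAuxR E).comp (D2.comp pr))).prod
      (p2.prod (p3.prod (p4 - Δt • ((psiAuxL E).comp (D2.comp pr))))) with hL
  have hDz : HasFDerivAt (fun y : E × E × E × E => D (y.2.2.1, y.2.1)) (D2.comp pr) x := by
    have h1 : HasFDerivAt pr pr x := pr.hasFDerivAt
    have h2 : HasFDerivAt D D2 z := (hDdiff.differentiable (by norm_num) z).hasFDerivAt
    exact h2.comp x h1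
  have hFd : HasFDerivAt (fun y : E × E × E × E =>
      (y.1 + Δt • gradient (fun p' => H y.2.2.1 p') y.2.1,
       y.2.1, y.2.2.1,
       y.2.2.2 - Δt • gradient (fun q' => H q' y.2.1) y.2.2.1)) L x := by
    have hFeq : (fun y : E × E × E × E =>
        (y.1 + Δt • gradient (fun p' => H y.2.2.1 p') y.2.1,
         y.2.1, y.2.2.1,
         y.2.2.2 - Δt • gradient (fun q' => H q' y.2.1) y.2.2.1))
        = fun y : E × E × E × E =>
        (y.1 + Δt • psiAuxR E (D (y.2.2.1, y.2.1)),
         y.2.1, y.2.2.1,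
         y.2.2.2 - Δt • psiAuxL E (D (y.2.2.1, y.2.1))) := by
      funext y
      have hr := gradient_slice_right H2 (y.2.2.1, y.2.1) (hH2diff _)
      have hl := gradient_slice_left H2 (y.2.2.1, y.2.1) (hH2diff _)
      rw [show (fun p' => H y.2.2.1 p') = (fun p' => H2 ((y.2.2.1, y.2.1).1, p')) from rfl,
        show (fun q' => H q' y.2.1) = (fun q' => H2 (q', (y.2.2.1, y.2.1).2)) from rfl, hr, hl]
    rw [hFeq, hL]
    apply HasFDerivAt.prodMk
    · exact p1.hasFDerivAt.add
        ((((psiAuxR E).hasFDerivAt.comp x hDz)).const_smul Δt)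
    apply HasFDerivAt.prodMk
    · exact p2.hasFDerivAt
    apply HasFDerivAt.prodMk
    · exact p3.hasFDerivAt
    · exact p4.hasFDerivAt.sub
        ((((psiAuxL E).hasFDerivAt.comp x hDz)).const_smul Δt)
  rw [hFd.fderiv]
  have hLapp : ∀ w : E × E × E × E, L w =
      (w.1 + Δt • psiAuxR E (D2 (w.2.2.1, w.2.1)), w.2.1, w.2.2.1,
        w.2.2.2 - Δt • psiAuxL E (D2 (w.2.2.1, w.2.1))) := by
    intro w
    rfl
  rw [hLapp u, hLapp v]
  set a : E × E := (u.2.2.1, u.2.1) with ha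
  set b : E × E := (v.2.2.1, v.2.1) with hb
  have key : ∀ c : E × E, ∀ c1 c2 : E, D2 c (0, c2) + D2 c (c1, 0) = D2 c (c1, c2) := by
    intro c c1 c2
    rw [← map_add]
    norm_num
  have h1 : (inner ℝ (Δt • psiAuxR E (D2 a)) v.2.1 : ℝ) = Δt * D2 a (0, v.2.1) := by
    rw [real_inner_smul_left, inner_psiAuxR]
  have h2 : (inner ℝ u.2.1 (Δt • psiAuxR E (D2 b)) : ℝ) = Δt * D2 b (0, u.2.1) := by
    rw [real_inner_comm, real_inner_smul_left, inner_psiAuxR]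
  have h3 : (inner ℝ u.2.2.1 (Δt • psiAuxL E (D2 b)) : ℝ) = Δt * D2 b (u.2.2.1, 0) := by
    rw [real_inner_comm, real_inner_smul_left, inner_psiAuxL]
  have h4 : (inner ℝ (Δt • psiAuxL E (D2 a)) v.2.2.1 : ℝ) = Δt * D2 a (v.2.2.1, 0) := by
    rw [real_inner_smul_left, inner_psiAuxL]
  simp only [extSymplForm, inner_add_left, inner_add_right, inner_sub_left, inner_sub_right,
    h1, h2, h3, h4]
  have hK : Δt * D2 a (0, v.2.1) + Δt * D2 a (v.2.2.1, 0)
      = Δt * D2 b (0, u.2.1) + Δt * D2 b (u.2.2.1, 0) := by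
    rw [← mul_add, ← mul_add, key a v.2.2.1 v.2.1, key b u.2.2.1 u.2.1]
    rw [show ((v.2.2.1 : E), (v.2.1 : E)) = b from rfl, show ((u.2.2.1 : E), (u.2.1 : E)) = a from rfl]
    rw [hsymm a b]
  linarith [hK]
end

section
/- The linear map ψ_{ωH_c}^{Δt} defined by sending (q, p, q̃, p̃) to ((1/2)[(q+q̃) + R₁(q-q̃) + R₂(p-p̃)], (1/2)[(p+p̃) - R₂(q-q̃) + R₁(p-p̃)], (1/2)[(q+q̃) - R₁(q-q̃) - R₂(p-p̃)], (1/2)[(p+p̃) + R₂(q-q̃) - R₁(p-p̃)]), where R₁ = cos(2ωΔt)·I and R₂ = sin(2ωΔt)·I, is symplectic on R^{4d} with respect to the canonical symplectic form pairing (q, q̃) with (p, p̃). -/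
/-- The linear map `ψ_{ωH_c}^{Δt}` sending `(q,p,q̃,p̃)` to
`((1/2)[(q+q̃) + R₁(q-q̃) + R₂(p-p̃)], (1/2)[(p+p̃) - R₂(q-q̃) + R₁(p-p̃)],
  (1/2)[(q+q̃) - R₁(q-q̃) - R₂(p-p̃)], (1/2)[(p+p̃) + R₂(q-q̃) - R₁(p-p̃)])`,
with `R₁ = cos(2ωΔt)I` and `R₂ = sin(2ωΔt)I`, is symplectic on `ℝ^{4d}` with respect to
the canonical symplectic form pairing `(q,q̃)` with `(p,p̃)`.  (Being linear, the map is
its own Jacobian, so symplecticity of the Jacobian is preservation of the form by the map.) -/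
theorem psi_Hc_symplectic
    {d : ℕ} (ω Δt : ℝ)
    (F : EuclideanSpace ℝ (Fin d) × EuclideanSpace ℝ (Fin d) ×
        EuclideanSpace ℝ (Fin d) × EuclideanSpace ℝ (Fin d) →
      EuclideanSpace ℝ (Fin d) × EuclideanSpace ℝ (Fin d) ×
        EuclideanSpace ℝ (Fin d) × EuclideanSpace ℝ (Fin d))
    (hF : F = fun x =>
      ((1 / 2 : ℝ) • ((x.1 + x.2.2.1) + Real.cos (2 * ω * Δt) • (x.1 - x.2.2.1)
          + Real.sin (2 * ω * Δt) • (x.2.1 - x.2.2.2)),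
       (1 / 2 : ℝ) • ((x.2.1 + x.2.2.2) - Real.sin (2 * ω * Δt) • (x.1 - x.2.2.1)
          + Real.cos (2 * ω * Δt) • (x.2.1 - x.2.2.2)),
       (1 / 2 : ℝ) • ((x.1 + x.2.2.1) - Real.cos (2 * ω * Δt) • (x.1 - x.2.2.1)
          - Real.sin (2 * ω * Δt) • (x.2.1 - x.2.2.2)),
       (1 / 2 : ℝ) • ((x.2.1 + x.2.2.2) + Real.sin (2 * ω * Δt) • (x.1 - x.2.2.1)
          - Real.cos (2 * ω * Δt) • (x.2.1 - x.2.2.2)))) :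
    ∀ u v, extSymplForm (F u) (F v) = extSymplForm u v := by
  subst hF
  intro u v
  obtain ⟨q, p, q', p'⟩ := u
  obtain ⟨Q, P, Q', P'⟩ := v
  simp only [extSymplForm, inner_add_left, inner_add_right, inner_sub_left, inner_sub_right,
    real_inner_smul_left, real_inner_smul_right]
  have h := Real.sin_sq_add_cos_sq (2*ω*Δt)
  linear_combination (((inner ℝ q P : ℝ) - inner ℝ q' P - inner ℝ q P' + inner ℝ q' P'
    - inner ℝ p Q + inner ℝ p' Q + inner ℝ p Q' - inner ℝ p' Q') * (1/2)) * h
end
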